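/- arXiv:2112.07377 — 3 statements merged into one kernel-verified Lean document; each statement's English description precedes it below -/
import Mathlib

section
/- The calculi NMVL_A and NMVL_R are deductively equivalent: for any set of sequents Σ and any sequent S, Σ ⊢_{NMVL_R} S if and only if Σ ⊢_{NMVL_A} S. -/
/-- Formulas over a set `C` of connectives (applied to lists of arguments). -/
inductive Fm (C : Type) : Type
  | atom : ℕ → Fm C
  | app : C → List (Fm C) → Fm C

noncomputable instance {C : Type} : DecidableEq (Fm C) := Classical.decEq _

/-- A sequent of finite sets of labelled formulas. -/
structure Sequent (C : Type) [DecidableEq C] (n : ℕ) where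
  ant : Finset (Fm C × Fin n)
  suc : Finset (Fm C × Fin n)

variable {C : Type} [DecidableEq C] {n : ℕ}

/-- A valuation legal w.r.t. the non-deterministic tables `tbl`. -/
def IsVal (tbl : C → List (Fin n) → Finset (Fin n)) (v : Fm C → Fin n) : Prop :=
  ∀ c args, v (Fm.app c args) ∈ tbl c (args.map v)

/-- A valuation satisfies a sequent. -/
def Sat (v : Fm C → Fin n) (S : Sequent C n) : Prop :=
  (∀ p ∈ S.ant, v p.1 = p.2) → ∃ p ∈ S.suc, v p.1 = p.2

/-- Semantic entailment. -/
def Entails (tbl : C → List (Fin n) → Finset (Fin n)) (H : Set (Sequent C n)) (S : Sequent C n) : Prop :=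
  ∀ v : Fm C → Fin n, IsVal tbl v → (∀ T ∈ H, Sat v T) → Sat v S

/-- The family (∗(φ₁,…,φ_ℓ)×k)⁻¹ of antecedent sets. -/
def Theta (tbl : C → List (Fin n) → Finset (Fin n)) (c : C) (args : List (Fm C)) (k : Fin n) :
    Set (Finset (Fm C × Fin n)) :=
  { Θ | ∃ ks : List (Fin n), ks.length = args.length ∧ k ∈ tbl c ks ∧ Θ = (args.zip ks).toFinset }

/-- Λ ∈ ⋁(∗(φ₁,…,φ_ℓ)×k)⁻¹ : a choice set hitting each Θ_q and contained in their union. -/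
def Choice (tbl : C → List (Fin n) → Finset (Fin n)) (c : C) (args : List (Fm C)) (k : Fin n)
    (Λ : Finset (Fm C × Fin n)) : Prop :=
  (∀ Θ ∈ Theta tbl c args k, ∃ x ∈ Θ, x ∈ Λ) ∧
  (∀ x ∈ Λ, ∃ Θ ∈ Theta tbl c args k, x ∈ Θ)

/-- Which optional axioms/rules a calculus has. -/
structure Rules where
  tableAx : Bool      -- table axioms (2)
  tableRuleS : Bool   -- succedent table rules (10)
  dualAx : Bool       -- distributively dual axioms (13)
  anteRule : Bool     -- antecedent introduction rules (17)
  multiShift : Bool   -- K-L-multi-shift (16)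
  cut : Bool
  res : Bool

/-- Derivability from hypothesis sequents `H`; axioms (ψ,k)→(ψ,k), L-shift, R-shift and
weakenings are always present, the other axioms/rules are governed by `R`. -/
inductive Deriv (R : Rules) (tbl : C → List (Fin n) → Finset (Fin n)) (H : Set (Sequent C n)) :
    Sequent C n → Prop
  | hyp {S} : S ∈ H → Deriv R tbl H S
  | ax (ψ : Fm C) (k : Fin n) : Deriv R tbl H ⟨{(ψ, k)}, {(ψ, k)}⟩
  | tableAx (c : C) (args : List (Fm C)) (ks : List (Fin n))
      (hlen : ks.length = args.length) (h : R.tableAx = true) :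
      Deriv R tbl H ⟨(args.zip ks).toFinset, (tbl c ks).image (fun k => (Fm.app c args, k))⟩
  | lshift {Γ Δ} (φ : Fm C) (k : Fin n) :
      Deriv R tbl H ⟨insert (φ, k) Γ, Δ⟩ →
      Deriv R tbl H ⟨Γ, Δ ∪ ({k}ᶜ : Finset (Fin n)).image (fun k' => (φ, k'))⟩
  | rshift {Γ Δ} (φ : Fm C) {k' k'' : Fin n} (h : k' ≠ k'') :
      Deriv R tbl H ⟨Γ, insert (φ, k') Δ⟩ → Deriv R tbl H ⟨insert (φ, k'') Γ, Δ⟩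
  | lweak {Γ Δ} (φ : Fm C) (k : Fin n) :
      Deriv R tbl H ⟨Γ, Δ⟩ → Deriv R tbl H ⟨insert (φ, k) Γ, Δ⟩
  | rweak {Γ Δ} (φ : Fm C) (k : Fin n) :
      Deriv R tbl H ⟨Γ, Δ⟩ → Deriv R tbl H ⟨Γ, insert (φ, k) Δ⟩
  | cut {Γ Δ} (φ : Fm C) (k : Fin n) (h : R.cut = true) :
      Deriv R tbl H ⟨Γ, insert (φ, k) Δ⟩ → Deriv R tbl H ⟨insert (φ, k) Γ, Δ⟩ →
      Deriv R tbl H ⟨Γ, Δ⟩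
  | res {Γ Δ' Δ''} (φ : Fm C) {k' k'' : Fin n} (h : R.res = true) (hk : k' ≠ k'') :
      Deriv R tbl H ⟨Γ, insert (φ, k') Δ'⟩ → Deriv R tbl H ⟨Γ, insert (φ, k'') Δ''⟩ →
      Deriv R tbl H ⟨Γ, Δ' ∪ Δ''⟩
  | tableRuleS {Γ Δ} (c : C) (args : List (Fm C)) (ks : List (Fin n))
      (hlen : ks.length = args.length) (h : R.tableRuleS = true)
      (prem : ∀ p ∈ args.zip ks, Deriv R tbl H ⟨Γ, insert p Δ⟩) :
      Deriv R tbl H ⟨Γ, Δ ∪ (tbl c ks).image (fun k => (Fm.app c args, k))⟩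
  | dualAx (c : C) (args : List (Fm C)) (k : Fin n) (Λ : Finset (Fm C × Fin n))
      (h : R.dualAx = true) (hΛ : Choice tbl c args k Λ) :
      Deriv R tbl H ⟨{(Fm.app c args, k)}, Λ⟩
  | anteRule {Γ Δ} (c : C) (args : List (Fm C)) (k : Fin n) (h : R.anteRule = true)
      (prem : ∀ ks : List (Fin n), ks.length = args.length → k ∈ tbl c ks →
        Deriv R tbl H ⟨Γ ∪ (args.zip ks).toFinset, Δ⟩) :
      Deriv R tbl H ⟨insert (Fm.app c args, k) Γ, Δ⟩
  | multiShift {Γ Δ} (φ : Fm C) (K : Finset (Fin n)) (h : R.multiShift = true)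
      (hK : K ≠ Finset.univ)
      (prem : ∀ k ∈ K, Deriv R tbl H ⟨insert (φ, k) Γ, Δ⟩) :
      Deriv R tbl H ⟨Γ, Δ ∪ Kᶜ.image (fun k' => (φ, k'))⟩

/-- NMVL_A : table axioms, cut and resolution. -/
def NMVL_A : Rules := ⟨true, false, false, false, false, true, true⟩
/-- NMVL_A with cut but without resolution. -/
def NMVL_A_cut : Rules := ⟨true, false, false, false, false, true, false⟩
/-- NMVL_A with resolution but without cut. -/
def NMVL_A_res : Rules := ⟨true, false, false, false, false, false, true⟩
/-- NMVL_R : succedent table rules, cut and resolution. -/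
def NMVL_R : Rules := ⟨false, true, false, false, false, true, true⟩
/-- NMVL_R without cut and resolution. -/
def NMVL_R_cf : Rules := ⟨false, true, false, false, false, false, false⟩
/-- NMVL_A^dd : distributively dual axioms, cut and resolution. -/
def NMVL_Add : Rules := ⟨false, false, true, false, false, true, true⟩
/-- NMVL_R^sd : antecedent table rules, multi-shift, cut and resolution. -/
def NMVL_Rsd : Rules := ⟨false, false, false, true, true, true, true⟩


theorem deriv_lweakU {R : Rules} {tbl : C → List (Fin n) → Finset (Fin n)}
    {H : Set (Sequent C n)} {Γ Δ : Finset (Fm C × Fin n)} (Γ₀ : Finset (Fm C × Fin n))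
    (h : Deriv R tbl H ⟨Γ, Δ⟩) : Deriv R tbl H ⟨Γ ∪ Γ₀, Δ⟩ := by
  induction Γ₀ using Finset.induction_on with
  | empty => simpa using h
  | insert _ _ ha ih =>
    rw [Finset.union_insert]
    simpa using Deriv.lweak _ _ ih

theorem deriv_rweakU {R : Rules} {tbl : C → List (Fin n) → Finset (Fin n)}
    {H : Set (Sequent C n)} {Γ Δ : Finset (Fm C × Fin n)} (Δ₀ : Finset (Fm C × Fin n))
    (h : Deriv R tbl H ⟨Γ, Δ⟩) : Deriv R tbl H ⟨Γ, Δ ∪ Δ₀⟩ := by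
  induction Δ₀ using Finset.induction_on with
  | empty => simpa using h
  | insert _ _ ha ih =>
    rw [Finset.union_insert]
    simpa using Deriv.rweak _ _ ih

theorem deriv_weak {R : Rules} {tbl : C → List (Fin n) → Finset (Fin n)}
    {H : Set (Sequent C n)} {Γ Δ Γ' Δ' : Finset (Fm C × Fin n)}
    (h : Deriv R tbl H ⟨Γ, Δ⟩) (hΓ : Γ ⊆ Γ') (hΔ : Δ ⊆ Δ') : Deriv R tbl H ⟨Γ', Δ'⟩ := by
  have h1 : Deriv R tbl H ⟨Γ ∪ Γ', Δ ∪ Δ'⟩ := deriv_rweakU _ (deriv_lweakU _ h)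
  rwa [Finset.union_eq_right.mpr hΓ, Finset.union_eq_right.mpr hΔ] at h1

theorem deriv_cutset {R : Rules} (hcut : R.cut = true)
    {tbl : C → List (Fin n) → Finset (Fin n)} {H : Set (Sequent C n)}
    (L : Finset (Fm C × Fin n)) :
    ∀ {Γ Δ : Finset (Fm C × Fin n)},
      (∀ p ∈ L, Deriv R tbl H ⟨Γ, insert p Δ⟩) → Deriv R tbl H ⟨Γ ∪ L, Δ⟩ →
      Deriv R tbl H ⟨Γ, Δ⟩ := by
  induction L using Finset.induction_on with
  | empty => intro Γ Δ _ h2; simpa using h2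
  | @insert a s ha ih =>
    intro Γ Δ h1 h2
    rw [Finset.union_insert] at h2
    have hleft : Deriv R tbl H ⟨Γ ∪ s, insert a Δ⟩ :=
      deriv_weak (h1 a (Finset.mem_insert_self _ _)) Finset.subset_union_left (subset_refl _)
    have hcutres : Deriv R tbl H ⟨Γ ∪ s, Δ⟩ := by
      have := Deriv.cut (Γ := Γ ∪ s) (Δ := Δ) a.1 a.2 hcut (by simpa using hleft) (by simpa using h2)
      exact this
    exact ih (fun p hp => h1 p (Finset.mem_insert_of_mem hp)) hcutres

/-- NMVL_A and NMVL_R are deductively equivalent. -/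
theorem stmt9 (hn : 2 ≤ n) (tbl : C → List (Fin n) → Finset (Fin n))
    (htbl : ∀ c ks, (tbl c ks).Nonempty) (H : Set (Sequent C n)) (S : Sequent C n) :
    Deriv NMVL_R tbl H S ↔ Deriv NMVL_A tbl H S := by
  constructor
  · intro h
    induction h with
    | hyp hS => exact Deriv.hyp hS
    | ax ψ k => exact Deriv.ax ψ k
    | tableAx c args ks hlen h => exact absurd h (by decide)
    | lshift φ k _ ih => exact Deriv.lshift φ k ih
    | rshift φ hk _ ih => exact Deriv.rshift φ hk ih
    | lweak φ k _ ih => exact Deriv.lweak φ k ih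
    | rweak φ k _ ih => exact Deriv.rweak φ k ih
    | cut φ k _ _ _ ih1 ih2 => exact Deriv.cut φ k rfl ih1 ih2
    | res φ _ hk _ _ ih1 ih2 => exact Deriv.res φ rfl hk ih1 ih2
    | dualAx c args k Λ h => exact absurd h (by decide)
    | anteRule c args k h => exact absurd h (by decide)
    | multiShift φ K h => exact absurd h (by decide)
    | @tableRuleS Γ Δ c args ks hlen h prem ih =>
      have base : Deriv NMVL_A tbl H
          ⟨Γ ∪ (args.zip ks).toFinset, (Δ ∪ (tbl c ks).image (fun k => (Fm.app c args, k)))⟩ :=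
        deriv_weak (Deriv.tableAx c args ks hlen rfl)
          Finset.subset_union_right Finset.subset_union_right
      refine deriv_cutset rfl (args.zip ks).toFinset ?_ base
      intro p hp
      exact deriv_weak (ih p (List.mem_toFinset.mp hp)) (subset_refl _)
        (Finset.insert_subset_insert _ Finset.subset_union_left)
  · intro h
    induction h with
    | hyp hS => exact Deriv.hyp hS
    | ax ψ k => exact Deriv.ax ψ k
    | tableRuleS c args ks hlen h => exact absurd h (by decide)
    | lshift φ k _ ih => exact Deriv.lshift φ k ih
    | rshift φ hk _ ih => exact Deriv.rshift φ hk ih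
    | lweak φ k _ ih => exact Deriv.lweak φ k ih
    | rweak φ k _ ih => exact Deriv.rweak φ k ih
    | cut φ k _ _ _ ih1 ih2 => exact Deriv.cut φ k rfl ih1 ih2
    | res φ _ hk _ _ ih1 ih2 => exact Deriv.res φ rfl hk ih1 ih2
    | dualAx c args k Λ h => exact absurd h (by decide)
    | anteRule c args k h => exact absurd h (by decide)
    | multiShift φ K h => exact absurd h (by decide)
    | tableAx c args ks hlen h =>
      have := Deriv.tableRuleS (R := NMVL_R) (tbl := tbl) (H := H)
        (Γ := (args.zip ks).toFinset) (Δ := (∅ : Finset (Fm C × Fin n))) c args ks hlen rfl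
        (fun p hp => deriv_weak (Deriv.ax p.1 p.2)
          (by simpa using List.mem_toFinset.mpr hp) (by simp))
      simpa using this
end

section
/- Cut and resolution elimination holds for NMVL_R: every sequent derivable in NMVL_R (without hypothesis sequents) is derivable in NMVL_R without using the cut rule or the resolution rule. -/
variable {C : Type} [DecidableEq C] {n : ℕ}

section CutElim

variable {R : Rules} {tbl : C → List (Fin n) → Finset (Fin n)} {H : Set (Sequent C n)}

lemma deriv_congr {Γ Δ Γ' Δ' : Finset (Fm C × Fin n)} (hΓ : Γ = Γ') (hΔ : Δ = Δ')
    (h : Deriv R tbl H ⟨Γ, Δ⟩) : Deriv R tbl H ⟨Γ', Δ'⟩ := hΓ ▸ hΔ ▸ h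

lemma deriv_union_ant {Γ Δ : Finset (Fm C × Fin n)} (E : Finset (Fm C × Fin n))
    (h : Deriv R tbl H ⟨Γ, Δ⟩) : Deriv R tbl H ⟨Γ ∪ E, Δ⟩ := by
  classical
  induction E using Finset.induction with
  | empty => simpa using h
  | insert _ _ ha ih =>
    exact deriv_congr (Finset.union_insert ..).symm rfl (Deriv.lweak _ _ ih)

lemma deriv_union_suc {Γ Δ : Finset (Fm C × Fin n)} (E : Finset (Fm C × Fin n))
    (h : Deriv R tbl H ⟨Γ, Δ⟩) : Deriv R tbl H ⟨Γ, Δ ∪ E⟩ := by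
  classical
  induction E using Finset.induction with
  | empty => simpa using h
  | insert _ _ ha ih =>
    exact deriv_congr rfl (Finset.union_insert ..).symm (Deriv.rweak _ _ ih)

lemma deriv_mono {Γ Δ Γ' Δ' : Finset (Fm C × Fin n)} (h : Deriv R tbl H ⟨Γ, Δ⟩)
    (h1 : Γ ⊆ Γ') (h2 : Δ ⊆ Δ') : Deriv R tbl H ⟨Γ', Δ'⟩ :=
  deriv_congr (Finset.union_eq_right.2 h1) (Finset.union_eq_right.2 h2)
    (deriv_union_suc _ (deriv_union_ant _ h))

/-- All right-shifted versions of antecedent elements. -/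
noncomputable def shiftSet (Γ : Finset (Fm C × Fin n)) : Finset (Fm C × Fin n) :=
  Γ.biUnion (fun p => ({p.2}ᶜ : Finset (Fin n)).image (fun k' => (p.1, k')))

lemma shift_out {Γ Δ : Finset (Fm C × Fin n)} (h : Deriv R tbl H ⟨Γ, Δ⟩) :
    Deriv R tbl H ⟨∅, Δ ∪ shiftSet Γ⟩ := by
  classical
  induction Γ using Finset.induction generalizing Δ with
  | empty => simpa [shiftSet] using h
  | @insert p Γ hp ih =>
    have h1 : Deriv R tbl H ⟨Γ, Δ ∪ ({p.2}ᶜ : Finset (Fin n)).image (fun k' => (p.1, k'))⟩ :=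
      Deriv.lshift p.1 p.2 h
    have h2 := ih h1
    refine deriv_congr rfl ?_ h2
    simp only [shiftSet, Finset.biUnion_insert, Finset.union_assoc, Finset.union_comm]

lemma unshift_one {Γ Δ : Finset (Fm C × Fin n)} (φ : Fm C) (k : Fin n)
    (K : Finset (Fin n)) (hk : k ∉ K)
    (h : Deriv R tbl H ⟨Γ, Δ ∪ K.image (fun k' => (φ, k'))⟩) :
    Deriv R tbl H ⟨insert (φ, k) Γ, Δ⟩ := by
  classical
  induction K using Finset.induction generalizing Γ with
  | empty => exact Deriv.lweak _ _ (by simpa using h)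
  | @insert k' K hk' ih =>
    have hne : k' ≠ k := fun e => hk (by simp [e])
    have h1 : Deriv R tbl H ⟨Γ, insert (φ, k') (Δ ∪ K.image (fun k' => (φ, k')))⟩ :=
      deriv_congr rfl (by rw [Finset.image_insert, Finset.union_insert]) h
    have h2 : Deriv R tbl H ⟨insert (φ, k) Γ, Δ ∪ K.image (fun k' => (φ, k'))⟩ :=
      Deriv.rshift φ hne h1
    have h3 := ih (fun hK => hk (Finset.mem_insert_of_mem hK)) h2
    exact deriv_congr (Finset.insert_idem ..) rfl h3

lemma shift_in {Γ₀ Γ Δ : Finset (Fm C × Fin n)}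
    (h : Deriv R tbl H ⟨Γ₀, Δ ∪ shiftSet Γ⟩) : Deriv R tbl H ⟨Γ₀ ∪ Γ, Δ⟩ := by
  classical
  induction Γ using Finset.induction generalizing Γ₀ with
  | empty => simpa [shiftSet] using h
  | @insert p Γ hp ih =>
    have h1 : Deriv R tbl H ⟨Γ₀, (Δ ∪ shiftSet Γ) ∪ ({p.2}ᶜ : Finset (Fin n)).image (fun k' => (p.1, k'))⟩ := by
      refine deriv_congr rfl ?_ h
      simp only [shiftSet, Finset.biUnion_insert]
      rw [Finset.union_left_comm, Finset.union_comm]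
    have h2 : Deriv R tbl H ⟨insert (p.1, p.2) Γ₀, Δ ∪ shiftSet Γ⟩ :=
      unshift_one p.1 p.2 _ (by simp) h1
    have h3 := ih h2
    refine deriv_congr ?_ rfl h3
    rw [Finset.insert_union, Finset.union_insert]

end CutElim
section Sound

variable {tbl : C → List (Fin n) → Finset (Fin n)}

lemma map_eq_of_zip {v : Fm C → Fin n} :
    ∀ (args : List (Fm C)) (ks : List (Fin n)), ks.length = args.length →
      (∀ p ∈ args.zip ks, v p.1 = p.2) → args.map v = ks := by
  intro args
  induction args with
  | nil => intro ks h _; exact (List.eq_nil_of_length_eq_zero h).symm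
  | cons a args ih =>
    intro ks hlen hz
    cases ks with
    | nil => simp at hlen
    | cons k ks =>
      simp only [List.zip_cons_cons, List.mem_cons] at hz
      simp only [List.map_cons, List.cons.injEq]
      refine ⟨hz _ (Or.inl rfl), ih ks (by simpa using hlen) fun p hp => hz p (Or.inr hp)⟩

lemma sound {S : Sequent C n} (hder : Deriv NMVL_R tbl ∅ S) : Entails tbl ∅ S := by
  induction hder with
  | hyp hS => exact absurd hS (Set.notMem_empty _)
  | ax ψ k => intro v hv _ hant; exact ⟨(ψ, k), by simp, hant _ (by simp)⟩
  | tableAx _ _ _ _ h => exact absurd h (by decide)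
  | dualAx _ _ _ _ h => exact absurd h (by decide)
  | anteRule _ _ _ h => exact absurd h (by decide)
  | multiShift _ _ h => exact absurd h (by decide)
  | lshift φ k hprem ih =>
    intro v hv hH hant
    by_cases hφ : v φ = k
    · obtain ⟨p, hp, hsat⟩ := ih v hv hH (by
        intro q hq
        rcases Finset.mem_insert.1 hq with rfl | hq
        · exact hφ
        · exact hant q hq)
      exact ⟨p, Finset.mem_union_left _ hp, hsat⟩
    · exact ⟨(φ, v φ), Finset.mem_union_right _ (by simp [hφ]), rfl⟩
  | rshift φ hkk hprem ih =>
    intro v hv hH hant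
    obtain ⟨p, hp, hsat⟩ := ih v hv hH (fun q hq => hant q (Finset.mem_insert_of_mem hq))
    rcases Finset.mem_insert.1 hp with rfl | hp
    · exact absurd (hsat ▸ hant _ (Finset.mem_insert_self _ _)) (by simpa using hkk)
    · exact ⟨p, hp, hsat⟩
  | lweak φ k hprem ih =>
    intro v hv hH hant
    exact ih v hv hH (fun q hq => hant q (Finset.mem_insert_of_mem hq))
  | rweak φ k hprem ih =>
    intro v hv hH hant
    obtain ⟨p, hp, hsat⟩ := ih v hv hH hant
    exact ⟨p, Finset.mem_insert_of_mem hp, hsat⟩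
  | cut φ k h hp1 hp2 ih1 ih2 =>
    intro v hv hH hant
    obtain ⟨p, hp, hsat⟩ := ih1 v hv hH hant
    rcases Finset.mem_insert.1 hp with rfl | hp
    · exact ih2 v hv hH (by
        intro q hq
        rcases Finset.mem_insert.1 hq with rfl | hq
        · exact hsat
        · exact hant q hq)
    · exact ⟨p, hp, hsat⟩
  | res φ h hkk hp1 hp2 ih1 ih2 =>
    intro v hv hH hant
    obtain ⟨p, hp, hsat⟩ := ih1 v hv hH hant
    rcases Finset.mem_insert.1 hp with rfl | hp
    · obtain ⟨q, hq, hsat'⟩ := ih2 v hv hH hant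
      rcases Finset.mem_insert.1 hq with rfl | hq
      · exact absurd (hsat ▸ hsat') (by simpa using hkk)
      · exact ⟨q, Finset.mem_union_right _ hq, hsat'⟩
    · exact ⟨p, Finset.mem_union_left _ hp, hsat⟩
  | tableRuleS c args ks hlen h prem ih =>
    intro v hv hH hant
    by_cases hall : ∀ p ∈ args.zip ks, v p.1 = p.2
    · have hmap : args.map v = ks := map_eq_of_zip args ks hlen hall
      refine ⟨(Fm.app c args, v (Fm.app c args)), ?_, rfl⟩
      exact Finset.mem_union_right _ (Finset.mem_image.2 ⟨_, hmap ▸ hv c args, rfl⟩)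
    · push_neg at hall
      obtain ⟨p, hp, hne⟩ := hall
      obtain ⟨q, hq, hsat⟩ := ih p hp v hv hH hant
      rcases Finset.mem_insert.1 hq with rfl | hq
      · exact absurd hsat hne
      · exact ⟨q, Finset.mem_union_left _ hq, hsat⟩

end Sound
section Complete

variable {tbl : C → List (Fin n) → Finset (Fin n)}

lemma zip_map_self {α β : Type*} (f : α → β) (l : List α) :
    l.zip (l.map f) = l.map (fun a => (a, f a)) := by
  induction l <;> simp_all

/-- Subformula closure. -/
noncomputable def subf : Fm C → Finset (Fm C)
  | .atom m => {.atom m}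
  | .app c args => insert (Fm.app c args) (args.attach.toFinset.biUnion fun a => subf a.1)
termination_by φ => sizeOf φ
decreasing_by
  have := List.sizeOf_lt_of_mem a.2
  simp; omega

lemma mem_subf_self (φ : Fm C) : φ ∈ subf φ := by
  cases φ <;> simp [subf]

lemma subf_sub_of_mem_args {c : C} {args : List (Fm C)} {a : Fm C} (ha : a ∈ args) :
    subf a ⊆ subf (Fm.app c args) := by
  intro x hx
  rw [subf]
  exact Finset.mem_insert_of_mem (Finset.mem_biUnion.2 ⟨⟨a, ha⟩, List.mem_toFinset.2 (List.mem_attach _ _), hx⟩)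

lemma subf_closed : ∀ (φ ψ : Fm C), ψ ∈ subf φ → subf ψ ⊆ subf φ := by
  have main : ∀ N (φ : Fm C), sizeOf φ ≤ N → ∀ ψ ∈ subf φ, subf ψ ⊆ subf φ := by
    intro N
    induction N with
    | zero => intro φ h; cases φ <;> simp at h
    | succ N ih =>
      intro φ hs ψ hψ
      cases φ with
      | atom m =>
        rw [subf] at hψ
        simp at hψ
        subst hψ; exact subset_rfl
      | app c args =>
        rw [subf] at hψ
        rcases Finset.mem_insert.1 hψ with rfl | hψ
        · exact subset_rfl
        · obtain ⟨a, _, ha⟩ := Finset.mem_biUnion.1 hψ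
          have hlt : sizeOf a.1 < sizeOf (Fm.app c args) := by
            have := List.sizeOf_lt_of_mem a.2
            simp; omega
          exact (ih a.1 (by omega) ψ ha).trans (subf_sub_of_mem_args a.2)
  exact fun φ => main (sizeOf φ) φ le_rfl

/-- The countermodel valuation. -/
noncomputable def vfun (tbl : C → List (Fin n) → Finset (Fin n))
    (Kf : Fm C → Finset (Fin n)) (d : Fin n) : Fm C → Fin n
  | .atom m =>
      if h : ((Finset.univ : Finset (Fin n)) \ Kf (.atom m)).Nonempty then h.choose else d
  | .app c args =>
      let ks := args.attach.map (fun a => vfun tbl Kf d a.1)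
      if h : (tbl c ks \ Kf (.app c args)).Nonempty then h.choose
      else if h2 : (tbl c ks).Nonempty then h2.choose else d
termination_by φ => sizeOf φ
decreasing_by
  have := List.sizeOf_lt_of_mem a.2
  simp; omega

lemma vfun_app (Kf : Fm C → Finset (Fin n)) (d : Fin n) (c : C) (args : List (Fm C)) :
    vfun tbl Kf d (.app c args) =
      (if h : (tbl c (args.map (vfun tbl Kf d)) \ Kf (.app c args)).Nonempty then h.choose
       else if h2 : (tbl c (args.map (vfun tbl Kf d))).Nonempty then h2.choose else d) := by
  rw [vfun]
  simp only [List.attach_map_val]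

lemma vfun_app_not_mem (Kf : Fm C → Finset (Fin n)) (d : Fin n) (c : C) (args : List (Fm C))
    (hne : (tbl c (args.map (vfun tbl Kf d)) \ Kf (.app c args)).Nonempty) :
    vfun tbl Kf d (.app c args) ∉ Kf (.app c args) := by
  rw [vfun_app, dif_pos hne]
  exact (Finset.mem_sdiff.1 hne.choose_spec).2

lemma vfun_isVal (htbl : ∀ c ks, (tbl c ks).Nonempty) (Kf : Fm C → Finset (Fin n)) (d : Fin n) :
    IsVal tbl (vfun tbl Kf d) := by
  intro c args
  rw [vfun_app]
  split
  · next h => exact (Finset.mem_sdiff.1 h.choose_spec).1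
  · rw [dif_pos (htbl c _)]
    exact (htbl c _).choose_spec

end Complete
section Main

variable {tbl : C → List (Fin n) → Finset (Fin n)}

lemma complete_rs (hn : 2 ≤ n) (htbl : ∀ c ks, (tbl c ks).Nonempty)
    (Sg : Finset (Fm C × Fin n)) (hval : Entails tbl ∅ (⟨∅, Sg⟩ : Sequent C n)) :
    Deriv NMVL_R_cf tbl ∅ (⟨∅, Sg⟩ : Sequent C n) := by
  classical
  by_contra hnd
  -- the finite subformula universe
  set F : Finset (Fm C) := Sg.biUnion (fun p => subf p.1) with hF
  set U : Finset (Fm C × Fin n) := F ×ˢ Finset.univ with hU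
  have hSgU : Sg ⊆ U := by
    intro p hp
    exact Finset.mem_product.2
      ⟨Finset.mem_biUnion.2 ⟨p, hp, mem_subf_self _⟩, Finset.mem_univ _⟩
  have hargsF : ∀ {c : C} {args : List (Fm C)}, Fm.app c args ∈ F → ∀ a ∈ args, a ∈ F := by
    intro c args hψ a ha
    obtain ⟨p, hp, hsub⟩ := Finset.mem_biUnion.1 hψ
    exact Finset.mem_biUnion.2
      ⟨p, hp, subf_closed _ _ hsub (subf_sub_of_mem_args ha (mem_subf_self a))⟩
  -- a maximal underivable extension of Sg inside U
  set 𝒮 : Finset (Finset (Fm C × Fin n)) :=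
    U.powerset.filter (fun Ω => Sg ⊆ Ω ∧ ¬ Deriv NMVL_R_cf tbl ∅ ⟨∅, Ω⟩) with h𝒮def
  have h𝒮 : Sg ∈ 𝒮 := Finset.mem_filter.2 ⟨Finset.mem_powerset.2 hSgU, subset_rfl, hnd⟩
  obtain ⟨Ω, hΩ𝒮, hmax⟩ := 𝒮.exists_max_image Finset.card ⟨Sg, h𝒮⟩
  obtain ⟨hΩU', hSgO, hndΩ⟩ := Finset.mem_filter.1 hΩ𝒮
  have hΩU : Ω ⊆ U := Finset.mem_powerset.1 hΩU'
  have hmaxadd : ∀ x ∈ U, x ∉ Ω → Deriv NMVL_R_cf tbl ∅ ⟨∅, insert x Ω⟩ := by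
    intro x hxU hxΩ
    by_contra hd
    have hmem : insert x Ω ∈ 𝒮 := Finset.mem_filter.2
      ⟨Finset.mem_powerset.2 (Finset.insert_subset hxU hΩU),
        hSgO.trans (Finset.subset_insert _ _), hd⟩
    have h1 := hmax _ hmem
    have h2 : Ω.card < (insert x Ω).card := Finset.card_lt_card (Finset.ssubset_insert hxΩ)
    omega
  -- no full row is contained in Ω
  have hrow : ∀ ψ : Fm C, ∃ k, (ψ, k) ∉ Ω := by
    intro ψ
    by_contra hall
    push_neg at hall
    have k0 : Fin n := ⟨0, by omega⟩
    have d0 : Deriv NMVL_R_cf tbl ∅ ⟨{(ψ, k0)}, {(ψ, k0)}⟩ := Deriv.ax ψ k0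
    have d1 : Deriv NMVL_R_cf tbl ∅
        ⟨∅, {(ψ, k0)} ∪ ({k0}ᶜ : Finset (Fin n)).image (fun k' => (ψ, k'))⟩ :=
      Deriv.lshift ψ k0 (deriv_congr (by simp) rfl d0)
    refine hndΩ (deriv_mono d1 (Finset.empty_subset _) ?_)
    intro q hq
    rcases Finset.mem_union.1 hq with hq | hq
    · rw [Finset.mem_singleton.1 hq]; exact hall k0
    · obtain ⟨k', _, rfl⟩ := Finset.mem_image.1 hq
      exact hall k'
  -- the countermodel
  set Kf : Fm C → Finset (Fin n) := fun ψ => Finset.univ.filter (fun k => (ψ, k) ∈ Ω) with hKf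
  have hKmem : ∀ ψ k, k ∈ Kf ψ ↔ (ψ, k) ∈ Ω := by intro ψ k; simp [hKf]
  have hd0 : (0 : ℕ) < n := by omega
  set v : Fm C → Fin n := vfun tbl Kf ⟨0, hd0⟩ with hv
  have hisval : IsVal tbl v := vfun_isVal htbl Kf _
  have havoid : ∀ ψ : Fm C, (ψ, v ψ) ∉ Ω := by
    have main : ∀ N (ψ : Fm C), sizeOf ψ ≤ N → (ψ, v ψ) ∉ Ω := by
      intro N
      induction N with
      | zero => intro ψ h; cases ψ <;> simp at h
      | succ N ih =>
        intro ψ hs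
        cases ψ with
        | atom m =>
          have hne : ((Finset.univ : Finset (Fin n)) \ Kf (.atom m)).Nonempty := by
            obtain ⟨k, hk⟩ := hrow (.atom m)
            exact ⟨k, Finset.mem_sdiff.2 ⟨Finset.mem_univ _, fun hc => hk ((hKmem _ _).1 hc)⟩⟩
          have hveq : v (Fm.atom m) = hne.choose := by
            rw [hv, vfun, dif_pos hne]
          rw [hveq]
          exact fun hc => (Finset.mem_sdiff.1 hne.choose_spec).2 ((hKmem _ _).2 hc)
        | app c args =>
          by_cases hne : (tbl c (args.map v) \ Kf (.app c args)).Nonempty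
          · exact fun hc => vfun_app_not_mem Kf ⟨0, hd0⟩ c args hne ((hKmem _ _).2 hc)
          · exfalso
            rw [Finset.not_nonempty_iff_eq_empty, Finset.sdiff_eq_empty_iff_subset] at hne
            -- the compound formula is in F
            have hψΩ : (Fm.app c args, (htbl c (args.map v)).choose) ∈ Ω :=
              (hKmem _ _).1 (hne (htbl c (args.map v)).choose_spec)
            have hψF : Fm.app c args ∈ F := (Finset.mem_product.1 (hΩU hψΩ)).1
            -- premises of the table rule
            have prem : ∀ p ∈ args.zip (args.map v),
                Deriv NMVL_R_cf tbl ∅ ⟨∅, insert p Ω⟩ := by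
              intro p hp
              rw [zip_map_self] at hp
              obtain ⟨a, ha, rfl⟩ := List.mem_map.1 hp
              have hsz : sizeOf a ≤ N := by
                have := List.sizeOf_lt_of_mem ha
                simp at hs; omega
              exact hmaxadd _ (Finset.mem_product.2
                ⟨hargsF hψF a ha, Finset.mem_univ _⟩) (ih a hsz)
            have hlen : (args.map v).length = args.length := List.length_map _
            have dtab := Deriv.tableRuleS (R := NMVL_R_cf) (H := (∅ : Set (Sequent C n)))
              (Γ := ∅) (Δ := Ω) c args (args.map v) hlen rfl prem
            refine hndΩ (deriv_congr rfl ?_ dtab)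
            refine Finset.union_eq_left.2 ?_
            intro x hx
            obtain ⟨k, hk, rfl⟩ := Finset.mem_image.1 hx
            exact (hKmem _ _).1 (hne hk)
    exact fun ψ => main (sizeOf ψ) ψ le_rfl
  -- contradiction with validity
  obtain ⟨p, hp, hsat⟩ := hval v hisval (by simp) (by simp)
  have heq : (p.1, v p.1) = p := by rw [hsat]
  have hpO : p ∈ Ω := hSgO hp
  exact havoid p.1 (by rw [heq]; exact hpO)

end Main
/-- cut/resolution elimination for NMVL_R. -/
theorem stmt11 (hn : 2 ≤ n) (tbl : C → List (Fin n) → Finset (Fin n))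
    (htbl : ∀ c ks, (tbl c ks).Nonempty) (S : Sequent C n)
    (hder : Deriv NMVL_R tbl ∅ S) : Deriv NMVL_R_cf tbl ∅ S := by
  classical
  have hE : Entails tbl ∅ S := sound hder
  have hE2 : Entails tbl ∅ (⟨∅, S.suc ∪ shiftSet S.ant⟩ : Sequent C n) := by
    intro v hv _ _
    by_cases hA : ∀ p ∈ S.ant, v p.1 = p.2
    · obtain ⟨p, hp, hs⟩ := hE v hv (by simp) hA
      exact ⟨p, Finset.mem_union_left _ hp, hs⟩
    · push_neg at hA
      obtain ⟨p, hp, hne⟩ := hA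
      refine ⟨(p.1, v p.1), Finset.mem_union_right _ ?_, rfl⟩
      exact Finset.mem_biUnion.2 ⟨p, hp, Finset.mem_image.2 ⟨v p.1, by simp [hne], rfl⟩⟩
  have hd := complete_rs hn htbl _ hE2
  have hfin := shift_in (Γ₀ := ∅) (Γ := S.ant) (Δ := S.suc) hd
  exact deriv_congr (by simp) rfl hfin
end

section
/- For every connective ∗, every label k, and every choice set Λ = {(φ_{j₁},k_{j₁,1}),…,(φ_{j_s},k_{j_s,s})} ∈ ⋁(∗(φ₁,…,φ_ℓ)×k)⁻¹, the sequent (∗(φ₁,…,φ_ℓ),k) → Λ is derivable in NMVL_A. -/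
variable {C : Type} [DecidableEq C] {n : ℕ}

section Aux

variable {R : Rules} {tbl : C → List (Fin n) → Finset (Fin n)} {H : Set (Sequent C n)}

lemma deriv_lweaken {Γ Δ : Finset (Fm C × Fin n)} (Γ₀ : Finset (Fm C × Fin n))
    (h : Deriv R tbl H ⟨Γ, Δ⟩) : Deriv R tbl H ⟨Γ ∪ Γ₀, Δ⟩ := by
  induction Γ₀ using Finset.induction with
  | empty => simpa using h
  | @insert a s ha ih =>
    rw [Finset.union_insert]
    simpa using Deriv.lweak a.1 a.2 ih

lemma deriv_rweaken {Γ Δ : Finset (Fm C × Fin n)} (Δ₀ : Finset (Fm C × Fin n))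
    (h : Deriv R tbl H ⟨Γ, Δ⟩) : Deriv R tbl H ⟨Γ, Δ ∪ Δ₀⟩ := by
  induction Δ₀ using Finset.induction with
  | empty => simpa using h
  | @insert a s ha ih =>
    rw [Finset.union_insert]
    simpa using Deriv.rweak a.1 a.2 ih

lemma deriv_weaken {Γ Γ' Δ Δ' : Finset (Fm C × Fin n)} (hΓ : Γ ⊆ Γ') (hΔ : Δ ⊆ Δ')
    (h : Deriv R tbl H ⟨Γ, Δ⟩) : Deriv R tbl H ⟨Γ', Δ'⟩ := by
  have h1 := deriv_rweaken (Γ := Γ) Δ' h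
  rw [Finset.union_eq_right.mpr hΔ] at h1
  have h2 := deriv_lweaken (Δ := Δ') Γ' h1
  rwa [Finset.union_eq_right.mpr hΓ] at h2

/-- Axiom with weakening. -/
lemma deriv_ax_mem {Γ Δ : Finset (Fm C × Fin n)} (x : Fm C × Fin n)
    (hx1 : x ∈ Γ) (hx2 : x ∈ Δ) : Deriv R tbl H ⟨Γ, Δ⟩ := by
  have := Deriv.ax (R := R) (tbl := tbl) (H := H) x.1 x.2
  exact deriv_weaken (by simpa using Finset.singleton_subset_iff.mpr hx1)
    (by simpa using Finset.singleton_subset_iff.mpr hx2) this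

/-- Repeated right shift: remove all succedent labels of φ from `K` (none equal to `k`). -/
lemma deriv_rshift_multi {Γ Δ : Finset (Fm C × Fin n)} (φ : Fm C) (k : Fin n)
    (K : Finset (Fin n)) (hk : k ∉ K)
    (h : Deriv R tbl H ⟨insert (φ, k) Γ, Δ ∪ K.image (fun k' => (φ, k'))⟩) :
    Deriv R tbl H ⟨insert (φ, k) Γ, Δ⟩ := by
  induction K using Finset.induction with
  | empty => simpa using h
  | @insert a K ha ih =>
    apply ih (fun hkK => hk (Finset.mem_insert_of_mem hkK))
    have hne : a ≠ k := fun e => hk (e ▸ Finset.mem_insert_self a K)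
    have h' : Deriv R tbl H
        ⟨insert (φ, k) Γ, insert (φ, a) (Δ ∪ K.image (fun k' => (φ, k')))⟩ := by
      rw [Finset.image_insert, Finset.union_insert] at h
      exact h
    have := Deriv.rshift φ hne h'
    simpa [Finset.insert_idem] using this

/-- Cut over all `n` labels of a formula. -/
lemma deriv_cut_all {Γ Δ : Finset (Fm C × Fin n)} (ψ : Fm C) (hcut : R.cut = true)
    (hn : 0 < n) (prem : ∀ k' : Fin n, Deriv R tbl H ⟨insert (ψ, k') Γ, Δ⟩) :
    Deriv R tbl H ⟨Γ, Δ⟩ := by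
  have key : ∀ K : Finset (Fin n),
      Deriv R tbl H ⟨Γ, Δ ∪ K.image (fun k' => (ψ, k'))⟩ → Deriv R tbl H ⟨Γ, Δ⟩ := by
    intro K
    induction K using Finset.induction with
    | empty => intro h; simpa using h
    | @insert a K ha ih =>
      intro h
      apply ih
      apply Deriv.cut ψ a hcut
      · rw [Finset.image_insert, Finset.union_insert] at h
        exact h
      · exact deriv_weaken (le_refl _) Finset.subset_union_left (prem a)
  have k0 : Fin n := ⟨0, hn⟩
  apply key {k0}ᶜ
  exact Deriv.lshift ψ k0 (prem k0)

/-- Main induction: with any partial assignment of labels to a prefix of the arguments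
in the antecedent, the sequent is derivable. -/
lemma deriv_partial (hn : 0 < n) (c : C) (args : List (Fm C)) (k : Fin n)
    (Λ : Finset (Fm C × Fin n))
    (hΛ : ∀ Θ ∈ Theta tbl c args k, ∃ x ∈ Θ, x ∈ Λ) :
    ∀ (rest pre : List (Fm C)) (ks0 : List (Fin n)), ks0.length = pre.length →
      args = pre ++ rest →
      Deriv NMVL_A tbl H ⟨insert (Fm.app c args, k) (pre.zip ks0).toFinset, Λ⟩ := by
  intro rest
  induction rest with
  | nil =>
    intro pre ks0 hlen heq
    rw [List.append_nil] at heq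
    subst heq
    by_cases hk : k ∈ tbl c ks0
    · obtain ⟨x, hxΘ, hxΛ⟩ := hΛ ((args.zip ks0).toFinset) ⟨ks0, hlen, hk, rfl⟩
      exact deriv_ax_mem x (Finset.mem_insert_of_mem hxΘ) hxΛ
    · have hax := Deriv.tableAx (R := NMVL_A) (tbl := tbl) (H := H) c args ks0 hlen rfl
      have h1 : Deriv NMVL_A tbl H
          ⟨insert (Fm.app c args, k) (args.zip ks0).toFinset,
            (∅ : Finset (Fm C × Fin n)) ∪
              (tbl c ks0).image (fun k' => (Fm.app c args, k'))⟩ := by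
        refine deriv_weaken (Finset.subset_insert _ _) ?_ hax
        simp
      have h2 := deriv_rshift_multi (Fm.app c args) k (tbl c ks0) hk h1
      exact deriv_weaken (le_refl _) (Finset.empty_subset _) h2
  | cons a rest ih =>
    intro pre ks0 hlen heq
    apply deriv_cut_all a rfl hn
    intro k'
    have hlen' : (ks0 ++ [k']).length = (pre ++ [a]).length := by
      simp [hlen]
    have heq' : args = (pre ++ [a]) ++ rest := by rw [heq, List.append_assoc]; rfl
    have := ih (pre ++ [a]) (ks0 ++ [k']) hlen' heq'
    have hzip : ((pre ++ [a]).zip (ks0 ++ [k'])).toFinset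
        = insert (a, k') (pre.zip ks0).toFinset := by
      rw [List.zip_append hlen.symm]
      ext x
      simp [or_comm]
    rw [hzip, Finset.insert_comm] at this
    exact this

end Aux

/-- for each choice set Λ ∈ ⋁(∗(φ₁,…,φ_ℓ)×k)⁻¹ the sequent
(∗(φ₁,…,φ_ℓ),k) → Λ is derivable in NMVL_A. -/
theorem stmt12 (hn : 2 ≤ n) (tbl : C → List (Fin n) → Finset (Fin n))
    (htbl : ∀ c ks, (tbl c ks).Nonempty) (H : Set (Sequent C n))
    (c : C) (args : List (Fm C)) (k : Fin n) (Λ : Finset (Fm C × Fin n))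
    (hΛ : Choice tbl c args k Λ) :
    Deriv NMVL_A tbl H ⟨{(Fm.app c args, k)}, Λ⟩ := by
  have h := deriv_partial (H := H) (by omega) c args k Λ hΛ.1 args [] [] rfl rfl
  simpa using h
end
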